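/- Let f : 2^V → ℝ≥0 be a monotone set function with f(∅) = 0, and define the submodularity ratio γ_{U,k}(f) = min over L ⊆ U and S with |S| ≤ k of (∑_{v∈S} f(L∪{v}) - f(L)) / (f(L∪S) - f(L)) (with 0/0 = 1). Then f is submodular if and only if γ_{U,k}(f) = 1 for every U ⊆ V and every k ≥ 1. -/
import Mathlib


open Finset

variable {V : Type*} [DecidableEq V] [Fintype V]

/-- The ratio (∑_{v∈S} f(v|L)) / f(S|L), with the convention 0/0 = 1
    (for monotone f, f(S|L) = 0 forces all numerator terms to be 0). -/
noncomputable def subRatio (f : Finset V → ℝ) (L S : Finset V) : ℝ :=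
  if f (L ∪ S) - f L = 0 then 1
  else (∑ v ∈ S, (f (insert v L) - f L)) / (f (L ∪ S) - f L)

/-- Submodularity ratio γ_{U,k}(f): the minimum of `subRatio` over L ⊆ U and |S| ≤ k. -/
noncomputable def submodularityRatio (f : Finset V → ℝ) (U : Finset V) (k : ℕ) : ℝ :=
  sInf {r : ℝ | ∃ L S : Finset V, L ⊆ U ∧ S.card ≤ k ∧ r = subRatio f L S}

lemma sum_marg (f : Finset V → ℝ)
    (hsub : ∀ A B : Finset V, A ⊆ B → ∀ v ∉ B, f (insert v B) - f B ≤ f (insert v A) - f A)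
    (L S : Finset V) : f (L ∪ S) - f L ≤ ∑ v ∈ S, (f (insert v L) - f L) := by
  induction S using Finset.induction with
  | empty => simp
  | @insert a S ha ih =>
    rw [Finset.sum_insert ha]
    have h1 : L ∪ insert a S = insert a (L ∪ S) := by
      ext x; simp [or_left_comm]
    by_cases haL : a ∈ L ∪ S
    · have h2 : insert a (L ∪ S) = L ∪ S := Finset.insert_eq_self.mpr haL
      have h3 : a ∈ L := by
        rcases Finset.mem_union.mp haL with h | h
        · exact h
        · exact absurd h ha
      have h4 : insert a L = L := Finset.insert_eq_self.mpr h3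
      rw [h1, h2, h4]
      linarith
    · have h2 := hsub L (L ∪ S) Finset.subset_union_left a haL
      rw [h1]
      linarith

lemma subRatio_nonneg (f : Finset V → ℝ)
    (hmono : ∀ A B : Finset V, A ⊆ B → f A ≤ f B) (L S : Finset V) :
    0 ≤ subRatio f L S := by
  unfold subRatio
  split_ifs with h
  · norm_num
  · have hd : 0 < f (L ∪ S) - f L := by
      have := hmono L (L ∪ S) Finset.subset_union_left
      cases lt_or_eq_of_le this with
      | inl h' => linarith
      | inr h' => exact absurd (by linarith) h
    have hn : 0 ≤ ∑ v ∈ S, (f (insert v L) - f L) := by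
      apply Finset.sum_nonneg
      intro v _
      have := hmono L (insert v L) (Finset.subset_insert v L)
      linarith
    positivity

theorem stmt_4 (f : Finset V → ℝ)
    (hmono : ∀ A B : Finset V, A ⊆ B → f A ≤ f B)
    (hempty : f ∅ = 0) (hnonneg : ∀ A, 0 ≤ f A) :
    (∀ A B : Finset V, A ⊆ B → ∀ v ∉ B,
        f (insert v B) - f B ≤ f (insert v A) - f A) ↔
    (∀ U : Finset V, ∀ k : ℕ, 1 ≤ k → submodularityRatio f U k = 1) := by
  constructor
  · intro hsub U k hk
    have hbdd : BddBelow {r : ℝ | ∃ L S : Finset V, L ⊆ U ∧ S.card ≤ k ∧ r = subRatio f L S} := by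
      refine ⟨0, ?_⟩
      rintro r ⟨L, S, _, _, rfl⟩
      exact subRatio_nonneg f hmono L S
    have hmem : (1 : ℝ) ∈ {r : ℝ | ∃ L S : Finset V, L ⊆ U ∧ S.card ≤ k ∧ r = subRatio f L S} := by
      refine ⟨∅, ∅, Finset.empty_subset U, by simp, ?_⟩
      simp [subRatio]
    apply le_antisymm
    · exact csInf_le hbdd hmem
    · apply le_csInf ⟨1, hmem⟩
      rintro r ⟨L, S, _, _, rfl⟩
      unfold subRatio
      split_ifs with h
      · exact le_refl 1
      · have hd : 0 < f (L ∪ S) - f L := by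
          have := hmono L (L ∪ S) Finset.subset_union_left
          cases lt_or_eq_of_le this with
          | inl h' => linarith
          | inr h' => exact absurd (by linarith) h
        rw [le_div_iff₀ hd]
        have := sum_marg f hsub L S
        linarith
  · intro hγ
    -- first derive the sum bound for all L S
    have key : ∀ L S : Finset V, f (L ∪ S) - f L ≤ ∑ v ∈ S, (f (insert v L) - f L) := by
      intro L S
      by_cases h : f (L ∪ S) - f L = 0
      · rw [h]
        apply Finset.sum_nonneg
        intro v _
        have := hmono L (insert v L) (Finset.subset_insert v L)
        linarith
      · have hk : 1 ≤ max 1 S.card := le_max_left _ _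
        have hγ' := hγ L (max 1 S.card) hk
        have hbdd : BddBelow {r : ℝ | ∃ L' S' : Finset V, L' ⊆ L ∧ S'.card ≤ max 1 S.card ∧ r = subRatio f L' S'} := by
          refine ⟨0, ?_⟩
          rintro r ⟨L', S', _, _, rfl⟩
          exact subRatio_nonneg f hmono L' S'
        have hmem : subRatio f L S ∈ {r : ℝ | ∃ L' S' : Finset V, L' ⊆ L ∧ S'.card ≤ max 1 S.card ∧ r = subRatio f L' S'} :=
          ⟨L, S, le_refl L, le_max_right _ _, rfl⟩
        have h1 : (1 : ℝ) ≤ subRatio f L S := by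
          calc (1 : ℝ) = submodularityRatio f L (max 1 S.card) := hγ'.symm
          _ ≤ subRatio f L S := csInf_le hbdd hmem
        have hd : 0 < f (L ∪ S) - f L := by
          have := hmono L (L ∪ S) Finset.subset_union_left
          cases lt_or_eq_of_le this with
          | inl h' => linarith
          | inr h' => exact absurd (by linarith) h
        unfold subRatio at h1
        rw [if_neg h, le_div_iff₀ hd] at h1
        linarith
    -- pairwise condition
    have pair : ∀ (A : Finset V) (u v : V), u ≠ v →
        f (insert v (insert u A)) - f (insert u A) ≤ f (insert v A) - f A := by
      intro A u v huv
      have := key A {u, v}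
      rw [Finset.sum_pair huv] at this
      have hset : A ∪ {u, v} = insert v (insert u A) := by
        ext x; simp; tauto
      by_cases huA : u ∈ A
      · have : insert u A = A := Finset.insert_eq_self.mpr huA
        rw [this]
      · rw [hset] at this
        have h2 : f (insert u A) ≤ f (insert v (insert u A)) :=
          hmono _ _ (Finset.subset_insert _ _)
        linarith
    -- induction on card (B \ A)
    intro A B hAB v hvB
    have : ∀ n : ℕ, ∀ A B : Finset V, (B \ A).card = n → A ⊆ B → v ∉ B →
        f (insert v B) - f B ≤ f (insert v A) - f A := by
      intro n
      induction n with
      | zero =>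
        intro A B hcard hAB hvB
        have : B \ A = ∅ := Finset.card_eq_zero.mp hcard
        have hBA : B = A := by
          apply Finset.Subset.antisymm _ hAB
          intro x hx
          by_contra hxA
          have : x ∈ B \ A := Finset.mem_sdiff.mpr ⟨hx, hxA⟩
          simp [‹B \ A = ∅›] at this
        rw [hBA]
      | succ n ih =>
        intro A B hcard hAB hvB
        have hne : (B \ A).Nonempty := by
          rw [← Finset.card_pos, hcard]; omega
        obtain ⟨u, hu⟩ := hne
        obtain ⟨huB, huA⟩ := Finset.mem_sdiff.mp hu
        have hA'B : insert u A ⊆ B := Finset.insert_subset huB hAB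
        have hcard' : (B \ insert u A).card = n := by
          have : B \ insert u A = (B \ A).erase u := by
            ext x; simp [Finset.mem_sdiff, Finset.mem_erase]; tauto
          rw [this, Finset.card_erase_of_mem hu, hcard]; omega
        have h1 := ih (insert u A) B hcard' hA'B hvB
        have h2 : f (insert v (insert u A)) - f (insert u A) ≤ f (insert v A) - f A := by
          apply pair A u v
          intro h; rw [h] at huB; exact hvB huB
        linarith
    exact this (B \ A).card A B rfl hAB hvB
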